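/- Weighted Poincaré inequality on an exterior domain: let U = ℝ² \ B̄_R and ω = √(1+r²). For every δ ≠ 0 there is C = C(R) such that ‖ω^{−(δ+1)} u‖_{L²} ≤ (C/|δ|) ‖ω^{−δ} ∇u‖_{L²} for all smooth compactly supported functions u on Ū (requiring u|_{∂U} = 0 when δ > 0). -/

import Mathlib

open Real MeasureTheory Set Filter
open scoped Topology

noncomputable section

abbrev E2 := EuclideanSpace ℝ (Fin 2)

namespace WPEaux

/-! ### Auxiliary facts about the weight function -/

lemma hasDerivAt_weight (δ r : ℝ) :
    HasDerivAt (fun r : ℝ => (1 + r^2) ^ (-δ : ℝ))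
      ((-δ) * (1 + r^2) ^ (-δ - 1 : ℝ) * (2*r)) r := by
  have h1 : HasDerivAt (fun r : ℝ => 1 + r^2) (2*r) r := by
    simpa using ((hasDerivAt_pow 2 r).const_add 1)
  have h2 : (0:ℝ) < 1 + r^2 := by positivity
  have := (Real.hasDerivAt_rpow_const (x := 1 + r^2) (p := -δ) (Or.inl h2.ne')).comp r h1
  simpa [Function.comp_def, mul_comm, mul_assoc, mul_left_comm] using this

lemma cont_weight (c : ℝ) : Continuous (fun r : ℝ => (1 + r^2) ^ (c : ℝ)) := by
  apply Continuous.rpow_const (by continuity)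
  intro x; left; positivity

lemma weight_pos (c r : ℝ) : (0:ℝ) < (1 + r^2) ^ (c : ℝ) := by
  apply Real.rpow_pos_of_pos; positivity

lemma intOn_vanish {R M : ℝ} {h : ℝ → ℝ} (hcont : Continuous h)
    (h0 : ∀ r, M < r → h r = 0) : IntegrableOn h (Ioi R) := by
  have hsub : Ioi R ⊆ Ioc R (max R M) ∪ Ioi (max R M) := by
    intro r hr
    rcases le_or_gt r (max R M) with h | h
    · exact Or.inl ⟨hr, h⟩
    · exact Or.inr h
  apply IntegrableOn.mono_set _ hsub
  apply IntegrableOn.union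
  · exact hcont.integrableOn_Icc.mono_set Ioc_subset_Icc_self
  · rw [integrableOn_congr_fun (g := fun _ => (0:ℝ)) ?_ measurableSet_Ioi]
    · exact integrableOn_zero
    · intro r hr
      exact h0 r (lt_of_le_of_lt (le_max_right R M) hr)

lemma sqrt_ratio_bound {R r : ℝ} (hR : 0 < R) (hr : R < r) :
    Real.sqrt (1 + r^2) ≤ r * Real.sqrt (1 + R^2) / R := by
  rw [le_div_iff₀ hR]
  have h1 : Real.sqrt (1 + r^2) * R = Real.sqrt ((1 + r^2) * R^2) := by
    rw [Real.sqrt_mul (by positivity), Real.sqrt_sq hR.le]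
  have h2 : r * Real.sqrt (1 + R^2) = Real.sqrt (r^2 * (1 + R^2)) := by
    rw [Real.sqrt_mul (by positivity), Real.sqrt_sq (hR.trans hr).le]
  rw [h1, h2]
  apply Real.sqrt_le_sqrt
  nlinarith

/-! ### The one-dimensional integration by parts inequality -/

lemma key1 {R δ : ℝ} (hR : 0 < R) (hδ : δ ≠ 0) {f f' : ℝ → ℝ}
    (hderiv : ∀ r, HasDerivAt f (f' r) r) (hf'c : Continuous f')
    (hfc : HasCompactSupport f) (hfR : 0 < δ → f R = 0) :
    |δ| * ∫ r in Ioi R, r * (1 + r^2) ^ (-δ - 1 : ℝ) * f r ^ 2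
      ≤ ∫ r in Ioi R, (1 + r^2) ^ (-δ : ℝ) * (|f r| * |f' r|) := by
  have hfcont : Continuous f := by
    have : Differentiable ℝ f := fun r => (hderiv r).differentiableAt
    exact this.continuous
  set g : ℝ → ℝ := fun r => (1 + r^2) ^ (-δ : ℝ) with hg
  set G : ℝ → ℝ := fun r => g r * f r ^ 2 with hGdef
  set G' : ℝ → ℝ := fun r =>
    ((-δ) * (1 + r^2) ^ (-δ - 1 : ℝ) * (2*r)) * f r ^ 2 + g r * (2 * f r * f' r) with hG'def
  have hGderiv : ∀ r, HasDerivAt G (G' r) r := by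
    intro r
    have h1 := hasDerivAt_weight δ r
    have h2 : HasDerivAt (fun r => f r ^ 2) (2 * f r * f' r) r := by
      simpa [Pi.pow_def, mul_comm, mul_assoc] using (hderiv r).pow 2
    have h3 := h1.mul h2
    exact h3
  have hsupp2 : HasCompactSupport (fun r => f r ^ 2) := by
    have : HasCompactSupport (f * f) := hfc.mul_left
    simpa [Pi.mul_def, pow_two, Pi.mul_apply] using this
  have hT1supp : HasCompactSupport (fun r => ((-δ) * (1 + r^2) ^ (-δ - 1 : ℝ) * (2*r)) * f r ^ 2) :=
    hsupp2.mul_left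
  have hT2supp : HasCompactSupport (fun r => g r * (2 * f r * f' r)) := by
    have h4 : HasCompactSupport ((fun r => 2 * f r) * f') := by
      have : HasCompactSupport (fun r => 2 * f r) := by
        have : HasCompactSupport ((fun _ : ℝ => (2:ℝ)) * f) := hfc.mul_left
        simpa [Pi.mul_def, Pi.mul_apply] using this
      exact this.mul_right
    have : HasCompactSupport (fun r => 2 * f r * f' r) := by
      simpa [Pi.mul_def, Pi.mul_apply] using h4
    exact this.mul_left
  have hT1cont : Continuous (fun r => ((-δ) * (1 + r^2) ^ (-δ - 1 : ℝ) * (2*r)) * f r ^ 2) := by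
    have := cont_weight (-δ - 1)
    fun_prop
  have hT2cont : Continuous (fun r => g r * (2 * f r * f' r)) := by
    have := cont_weight (-δ)
    fun_prop
  have hT1int : IntegrableOn (fun r => ((-δ) * (1 + r^2) ^ (-δ - 1 : ℝ) * (2*r)) * f r ^ 2)
      (Ioi R) := (hT1cont.integrable_of_hasCompactSupport hT1supp).integrableOn
  have hT2int : IntegrableOn (fun r => g r * (2 * f r * f' r)) (Ioi R) :=
    (hT2cont.integrable_of_hasCompactSupport hT2supp).integrableOn
  have hG'int : IntegrableOn G' (Ioi R) := hT1int.add hT2int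
  have hGtend : Tendsto G atTop (𝓝 0) := by
    have hev : ∀ᶠ r in atTop, G r = 0 := by
      obtain ⟨M, hM⟩ : ∃ M, tsupport f ⊆ Icc (-M) M := by
        obtain ⟨M, hM⟩ := hfc.isBounded.subset_closedBall 0
        exact ⟨M, by simpa [Real.closedBall_eq_Icc] using hM⟩
      filter_upwards [eventually_gt_atTop M] with r hr
      have : f r = 0 := by
        apply image_eq_zero_of_notMem_tsupport
        intro h
        have := (hM h).2
        linarith
      simp [hGdef, this]
    exact tendsto_const_nhds.congr' (hev.mono fun r h => h.symm)
  have hftc : ∫ r in Ioi R, G' r = 0 - G R :=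
    integral_Ioi_of_hasDerivAt_of_tendsto' (fun x _ => hGderiv x) hG'int hGtend
  rw [integral_add hT1int hT2int] at hftc
  set A : ℝ := ∫ r in Ioi R, r * (1 + r^2) ^ (-δ - 1 : ℝ) * f r ^ 2 with hA
  set T : ℝ := ∫ r in Ioi R, g r * (f r * f' r) with hT
  have h1 : ∫ r in Ioi R, ((-δ) * (1 + r^2) ^ (-δ - 1 : ℝ) * (2*r)) * f r ^ 2
      = (-2*δ) * A := by
    rw [hA, ← integral_const_mul]
    apply setIntegral_congr_fun measurableSet_Ioi
    intro r _; ring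
  have h2 : ∫ r in Ioi R, g r * (2 * f r * f' r) = 2 * T := by
    rw [hT, ← integral_const_mul]
    apply setIntegral_congr_fun measurableSet_Ioi
    intro r _; ring
  rw [h1, h2] at hftc
  have hApos : 0 ≤ A := by
    apply setIntegral_nonneg measurableSet_Ioi
    intro r hr
    have hr0 : (0:ℝ) ≤ r := (hR.trans hr).le
    exact mul_nonneg (mul_nonneg hr0 (weight_pos (-δ - 1) r).le) (sq_nonneg _)
  have habs : |T| ≤ ∫ r in Ioi R, (1 + r^2) ^ (-δ : ℝ) * (|f r| * |f' r|) := by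
    have := norm_integral_le_integral_norm (μ := volume.restrict (Ioi R))
      (f := fun r => g r * (f r * f' r))
    rw [Real.norm_eq_abs] at this
    refine le_trans this (le_of_eq ?_)
    apply setIntegral_congr_fun measurableSet_Ioi
    intro r _
    simp only [hg, Real.norm_eq_abs, abs_mul]
    rw [abs_of_nonneg (weight_pos (-δ) r).le]
  have hGR : 0 ≤ G R := by
    have := (weight_pos (-δ) R).le
    simp only [hGdef]; positivity
  rcases lt_or_gt_of_ne hδ with hneg | hpos
  · have h5 : 2 * |δ| * A = -(G R) - 2 * T := by
      rw [abs_of_neg hneg]; linarith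
    have h3 : 2 * |δ| * A ≤ 2 * |T| := by
      rw [h5]
      have := neg_abs_le T
      linarith
    nlinarith [abs_nonneg T]
  · have hGR0 : G R = 0 := by simp [hGdef, hfR hpos]
    have h5 : 2 * δ * A = 2 * T := by rw [hGR0] at hftc; linarith
    have h3 : |δ| * A = T := by rw [abs_of_pos hpos]; linarith
    have := le_abs_self T
    linarith

/-! ### The inequality along each ray -/

lemma key2 {R δ : ℝ} (hR : 0 < R) (hδ : δ ≠ 0) {u : E2 → ℝ}
    (hu : ContDiff ℝ (⊤ : ℕ∞) u)
    (hb : 0 < δ → ∀ x : E2, ‖x‖ = R → u x = 0) {M : ℝ}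
    (hM : ∀ x : E2, M < ‖x‖ → u x = 0) (hM0 : 0 ≤ M)
    (c : E2) (hc : ‖c‖ = 1) :
    |δ| * ∫ r in Ioi R, r * (1 + r^2) ^ (-δ - 1 : ℝ) * u (r • c) ^ 2
      ≤ (Real.sqrt (1 + R^2) / R) * ∫ r in Ioi R,
          r * (1 + r^2) ^ (-δ - 1/2 : ℝ) * (|u (r • c)| * ‖fderiv ℝ u (r • c)‖) := by
  have hdiff : Differentiable ℝ u := hu.differentiable (by simp)
  set f : ℝ → ℝ := fun r => u (r • c) with hf
  set f' : ℝ → ℝ := fun r => fderiv ℝ u (r • c) c with hf'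
  have hsmul : ∀ r : ℝ, HasDerivAt (fun s : ℝ => s • c) c r := by
    intro r
    simpa using (hasDerivAt_id r).smul_const c
  have hderiv : ∀ r, HasDerivAt f (f' r) r := fun r =>
    ((hdiff (r • c)).hasFDerivAt).comp_hasDerivAt r (hsmul r)
  have hcsc : Continuous (fun r : ℝ => r • c) := by continuity
  have hDu : Continuous fun x => fderiv ℝ u x := hu.continuous_fderiv (by simp)
  have hf'c : Continuous f' :=
    ((ContinuousLinearMap.apply ℝ ℝ c).continuous).comp (hDu.comp hcsc)
  have hfcont : Continuous f := hu.continuous.comp hcsc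
  have hnorm_smul : ∀ r : ℝ, ‖r • c‖ = |r| := by
    intro r; rw [norm_smul, hc, Real.norm_eq_abs, mul_one]
  have hvanish : ∀ r : ℝ, M < r → f r = 0 := by
    intro r hr
    apply hM
    rw [hnorm_smul]
    exact lt_of_lt_of_le hr (le_abs_self r)
  have hfc : HasCompactSupport f := by
    apply HasCompactSupport.intro (isCompact_Icc (a := -M) (b := M))
    intro r hr
    simp only [mem_Icc, not_and_or, not_le] at hr
    apply hM
    rw [hnorm_smul]
    rcases hr with h | h
    · rw [abs_of_neg (by linarith)]; linarith
    · exact lt_of_lt_of_le h (le_abs_self r)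
  have hfR : 0 < δ → f R = 0 := fun hpos =>
    hb hpos _ (by rw [hnorm_smul, abs_of_pos hR])
  refine (key1 hR hδ hderiv hf'c hfc hfR).trans ?_
  rw [← integral_const_mul]
  have hlhs_int : IntegrableOn (fun r => (1 + r^2) ^ (-δ : ℝ) * (|f r| * |f' r|)) (Ioi R) := by
    apply intOn_vanish (M := M)
    · exact (cont_weight (-δ)).mul (hfcont.abs.mul hf'c.abs)
    · intro r hr; simp [hvanish r hr]
  have hrhs_int : IntegrableOn (fun r =>
      Real.sqrt (1 + R^2) / R * (r * (1 + r^2) ^ (-δ - 1/2 : ℝ) * (|f r| * ‖fderiv ℝ u (r • c)‖)))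
      (Ioi R) := by
    apply intOn_vanish (M := M)
    · exact continuous_const.mul ((continuous_id.mul (cont_weight (-δ - 1/2))).mul
        (hfcont.abs.mul ((hDu.comp hcsc).norm)))
    · intro r hr; simp [hvanish r hr]
  apply setIntegral_mono_on hlhs_int hrhs_int measurableSet_Ioi
  intro r hr
  have hrpos : 0 < r := hR.trans hr
  have hop : |f' r| ≤ ‖fderiv ℝ u (r • c)‖ := by
    have := (fderiv ℝ u (r • c)).le_opNorm c
    rw [hc, mul_one] at this
    simpa [hf', Real.norm_eq_abs] using this
  have hw : (1 + r^2) ^ (-δ : ℝ) ≤ Real.sqrt (1 + R^2) / R * (r * (1 + r^2) ^ (-δ - 1/2 : ℝ)) := by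
    have hsplit : (1 + r^2) ^ (-δ : ℝ)
        = (1 + r^2) ^ (-δ - 1/2 : ℝ) * Real.sqrt (1 + r^2) := by
      rw [Real.sqrt_eq_rpow, ← Real.rpow_add (by positivity)]
      norm_num
    rw [hsplit]
    have hb1 := sqrt_ratio_bound hR hr
    have hwpos := weight_pos (-δ - 1/2) r
    calc (1 + r^2) ^ (-δ - 1/2 : ℝ) * Real.sqrt (1 + r^2)
        ≤ (1 + r^2) ^ (-δ - 1/2 : ℝ) * (r * Real.sqrt (1 + R^2) / R) :=
          mul_le_mul_of_nonneg_left hb1 hwpos.le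
      _ = Real.sqrt (1 + R^2) / R * (r * (1 + r^2) ^ (-δ - 1/2 : ℝ)) := by ring
  calc (1 + r^2) ^ (-δ : ℝ) * (|f r| * |f' r|)
      ≤ (1 + r^2) ^ (-δ : ℝ) * (|f r| * ‖fderiv ℝ u (r • c)‖) := by
        apply mul_le_mul_of_nonneg_left _ (weight_pos (-δ) r).le
        exact mul_le_mul_of_nonneg_left hop (abs_nonneg _)
    _ ≤ (Real.sqrt (1 + R^2) / R * (r * (1 + r^2) ^ (-δ - 1/2 : ℝ))) *
          (|f r| * ‖fderiv ℝ u (r • c)‖) := by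
        apply mul_le_mul_of_nonneg_right hw
        positivity
    _ = Real.sqrt (1 + R^2) / R *
          (r * (1 + r^2) ^ (-δ - 1/2 : ℝ) * (|f r| * ‖fderiv ℝ u (r • c)‖)) := by ring

/-! ### Polar coordinates on `E2` -/

def psiE : ℝ × ℝ ≃ᵐ E2 :=
  ((MeasurableEquiv.toLp 2 (Fin 2 → ℝ)).symm.trans (MeasurableEquiv.finTwoArrow)).symm

lemma psiE_mp : MeasurePreserving psiE :=
  ((EuclideanSpace.volume_preserving_symm_measurableEquiv_toLp (Fin 2)).trans
    (volume_preserving_finTwoArrow ℝ)).symm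

lemma norm_psiE (p : ℝ × ℝ) : ‖psiE p‖ = Real.sqrt (p.1^2 + p.2^2) := by
  rw [EuclideanSpace.norm_eq]
  simp [Fin.sum_univ_two, Real.norm_eq_abs, sq_abs]
  rfl

def cvec (θ : ℝ) : E2 := psiE (Real.cos θ, Real.sin θ)

lemma norm_cvec (θ : ℝ) : ‖cvec θ‖ = 1 := by
  rw [cvec, norm_psiE]; simp [Real.sin_sq_add_cos_sq, Real.cos_sq_add_sin_sq]

lemma psiE_polar (r θ : ℝ) : psiE (polarCoord.symm (r, θ)) = r • cvec θ := by
  have h : polarCoord.symm (r, θ) = (r * Real.cos θ, r * Real.sin θ) := rfl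
  rw [h]
  ext i
  fin_cases i <;> rfl

lemma continuous_psiE : Continuous (fun p : ℝ × ℝ => psiE p) := by
  have h : (fun p : ℝ × ℝ => psiE p)
      = fun p : ℝ × ℝ => (EuclideanSpace.equiv (Fin 2) ℝ).symm ![p.1, p.2] := by
    funext p
    ext i
    fin_cases i <;> rfl
  rw [h]
  refine (EuclideanSpace.equiv (Fin 2) ℝ).symm.continuous.comp ?_
  refine continuous_pi fun i => ?_
  fin_cases i
  · exact continuous_fst
  · exact continuous_snd

lemma continuous_polarmap : Continuous (fun p : ℝ × ℝ => p.1 • cvec p.2) := by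
  have h : (fun p : ℝ × ℝ => p.1 • cvec p.2)
      = fun p : ℝ × ℝ => psiE (p.1 * Real.cos p.2, p.1 * Real.sin p.2) := by
    funext p
    rw [← psiE_polar p.1 p.2]
    rfl
  rw [h]
  apply continuous_psiE.comp
  fun_prop

lemma norm_polarmap (r θ : ℝ) : ‖r • cvec θ‖ = |r| := by
  rw [norm_smul, norm_cvec, Real.norm_eq_abs, mul_one]

lemma polar_eq {R : ℝ} (hR : 0 < R) (F : E2 → ℝ) (hF : Continuous F) {M : ℝ}
    (hM : ∀ x : E2, M < ‖x‖ → F x = 0) :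
    IntegrableOn (fun p : ℝ × ℝ => p.1 * F (p.1 • cvec p.2)) (Ioi R ×ˢ Ioo (-π) π) ∧
    (∫ x in {x : E2 | R < ‖x‖}, F x)
      = ∫ p in Ioi R ×ˢ Ioo (-π) π, p.1 * F (p.1 • cvec p.2) := by
  have hGc : Continuous (fun p : ℝ × ℝ => p.1 * F (p.1 • cvec p.2)) :=
    continuous_fst.mul (hF.comp continuous_polarmap)
  constructor
  · have hsub : Ioi R ×ˢ Ioo (-π) π ⊆
        (Icc R M ×ˢ Icc (-π) π) ∪ (Ioi M ×ˢ Ioo (-π) π) := by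
      rintro ⟨r, θ⟩ ⟨hr, hθ⟩
      rcases le_or_gt r M with h | h
      · exact Or.inl ⟨⟨le_of_lt hr, h⟩, le_of_lt hθ.1, le_of_lt hθ.2⟩
      · exact Or.inr ⟨h, hθ⟩
    apply IntegrableOn.mono_set _ hsub
    apply IntegrableOn.union
    · exact hGc.continuousOn.integrableOn_compact (isCompact_Icc.prod isCompact_Icc)
    · rw [integrableOn_congr_fun (g := fun _ => (0:ℝ)) ?_
        (measurableSet_Ioi.prod measurableSet_Ioo)]
      · exact integrableOn_zero
      · rintro ⟨r, θ⟩ ⟨hr, _⟩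
        have : F (r • cvec θ) = 0 := by
          apply hM
          rw [norm_polarmap]
          exact lt_of_lt_of_le hr (le_abs_self r)
        simp [this]
  · have h1 : (∫ x in {x : E2 | R < ‖x‖}, F x)
        = ∫ p in psiE ⁻¹' {x : E2 | R < ‖x‖}, F (psiE p) :=
      (psiE_mp.setIntegral_preimage_emb psiE.measurableEmbedding F _).symm
    rw [h1]
    rw [← integral_indicator (by
      have : psiE ⁻¹' {x : E2 | R < ‖x‖} = {p : ℝ × ℝ | R < Real.sqrt (p.1^2 + p.2^2)} := by
        ext p; simp [norm_psiE]
      rw [this]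
      apply measurableSet_lt measurable_const
      fun_prop)]
    rw [← integral_comp_polarCoord_symm]
    have h2 : ∀ q ∈ polarCoord.target,
        q.1 • ((psiE ⁻¹' {x : E2 | R < ‖x‖}).indicator (fun p => F (psiE p)) (polarCoord.symm q))
        = ({p : ℝ × ℝ | R < p.1}).indicator (fun p => p.1 * F (p.1 • cvec p.2)) q := by
      rintro ⟨r, θ⟩ hq
      rw [polarCoord_target] at hq
      have hr0 : 0 < r := hq.1
      have hmem : polarCoord.symm (r, θ) ∈ psiE ⁻¹' {x : E2 | R < ‖x‖} ↔ R < r := by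
        simp only [mem_preimage, mem_setOf_eq, psiE_polar, norm_polarmap]
        rw [abs_of_pos hr0]
      by_cases h : R < r
      · rw [indicator_of_mem (hmem.mpr h), indicator_of_mem (by exact h)]
        simp only [psiE_polar]
        rfl
      · rw [indicator_of_notMem (fun hh => h (hmem.mp hh)), indicator_of_notMem (by exact h)]
        simp
    rw [setIntegral_congr_fun polarCoord.open_target.measurableSet h2]
    rw [setIntegral_indicator (by exact measurableSet_lt measurable_const measurable_fst)]
    have hset : polarCoord.target ∩ {p : ℝ × ℝ | R < p.1} = Ioi R ×ˢ Ioo (-π) π := by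
      rw [polarCoord_target]
      ext p
      obtain ⟨r, θ⟩ := p
      simp only [mem_inter_iff, mem_prod, mem_Ioi, mem_Ioo, mem_setOf_eq]
      constructor
      · rintro ⟨⟨_, hθ⟩, hr⟩; exact ⟨hr, hθ⟩
      · rintro ⟨hr, hθ⟩; exact ⟨⟨hR.trans hr, hθ⟩, hr⟩
    rw [hset]

lemma prod_to_iterated {R : ℝ} {G : ℝ × ℝ → ℝ}
    (hint : IntegrableOn G (Ioi R ×ˢ Ioo (-π) π)) :
    ∫ p in Ioi R ×ˢ Ioo (-π) π, G p
      = ∫ θ in Ioo (-π) π, ∫ r in Ioi R, G (r, θ) := by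
  have h := hint
  rw [IntegrableOn, Measure.volume_eq_prod, ← Measure.prod_restrict] at h
  rw [Measure.volume_eq_prod, ← Measure.prod_restrict]
  exact integral_prod_symm G h

lemma marginal_integrable {R : ℝ} {G : ℝ × ℝ → ℝ}
    (hint : IntegrableOn G (Ioi R ×ˢ Ioo (-π) π)) :
    Integrable (fun θ => ∫ r in Ioi R, G (r, θ)) (volume.restrict (Ioo (-π) π)) := by
  have h := hint
  rw [IntegrableOn, Measure.volume_eq_prod, ← Measure.prod_restrict] at h
  exact h.integral_prod_right

end WPEaux

open WPEaux

set_option maxHeartbeats 2000000 in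
/-- **weighted Poincaré inequality on an exterior domain.** Let
`U = ℝ² \ B̄_R` and `ω = √(1 + r²)`.  For every `δ ≠ 0` there is `C = C(R)` such that
`‖ω^{−(δ+1)} u‖_{L²} ≤ (C/|δ|) ‖ω^{−δ} ∇u‖_{L²}` for all smooth compactly supported
functions `u` on `Ū` (requiring `u|_{∂U} = 0` when `δ > 0`). -/
theorem weighted_poincare_exterior_domain (R : ℝ) (hR : 0 < R) :
    ∃ C > 0, ∀ δ : ℝ, δ ≠ 0 → ∀ u : E2 → ℝ,
      ContDiff ℝ (⊤ : ℕ∞) u → HasCompactSupport u →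
      (0 < δ → ∀ x : E2, ‖x‖ = R → u x = 0) →
      Real.sqrt (∫ x in {x : E2 | R < ‖x‖},
          (Real.sqrt (1 + ‖x‖ ^ 2)) ^ (-(2 : ℝ) * (δ + 1)) * (u x) ^ 2) ≤
        (C / |δ|) *
          Real.sqrt (∫ x in {x : E2 | R < ‖x‖},
            (Real.sqrt (1 + ‖x‖ ^ 2)) ^ (-(2 : ℝ) * δ) * ‖fderiv ℝ u x‖ ^ 2) := by
  set K : ℝ := Real.sqrt (1 + R^2) / R with hK
  have hKpos : 0 < K := by
    apply div_pos _ hR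
    apply Real.sqrt_pos.mpr
    positivity
  refine ⟨K, hKpos, ?_⟩
  intro δ hδ u hu hsu hb
  have hδa : 0 < |δ| := abs_pos.mpr hδ
  -- the support bound
  obtain ⟨M, hM0, hM⟩ : ∃ M : ℝ, 0 ≤ M ∧ ∀ x : E2, M < ‖x‖ → u x = 0 := by
    obtain ⟨M0, hM0⟩ := hsu.isBounded.subset_closedBall 0
    refine ⟨max M0 0, le_max_right _ _, fun x hx => ?_⟩
    apply image_eq_zero_of_notMem_tsupport
    intro hmem
    have := hM0 hmem
    rw [Metric.mem_closedBall, dist_zero_right] at this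
    exact absurd this (not_le.mpr (lt_of_le_of_lt (le_max_left M0 0) hx))
  have hdiff : Differentiable ℝ u := hu.differentiable (by simp)
  have hDu : Continuous fun x => fderiv ℝ u x := hu.continuous_fderiv (by simp)
  -- rewrite the weights
  have hrw1 : ∀ x : E2, (Real.sqrt (1 + ‖x‖ ^ 2)) ^ (-(2 : ℝ) * (δ + 1))
      = ((1 + ‖x‖ ^ 2) : ℝ) ^ (-δ - 1 : ℝ) := by
    intro x
    rw [Real.sqrt_eq_rpow, ← Real.rpow_mul (by positivity)]
    congr 1
    ring
  have hrw2 : ∀ x : E2, (Real.sqrt (1 + ‖x‖ ^ 2)) ^ (-(2 : ℝ) * δ)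
      = ((1 + ‖x‖ ^ 2) : ℝ) ^ (-δ : ℝ) := by
    intro x
    rw [Real.sqrt_eq_rpow, ← Real.rpow_mul (by positivity)]
    congr 1
    ring
  simp_rw [hrw1, hrw2]
  set A : ℝ := ∫ x in {x : E2 | R < ‖x‖}, ((1 + ‖x‖ ^ 2) : ℝ) ^ (-δ - 1 : ℝ) * u x ^ 2 with hA
  set B : ℝ := ∫ x in {x : E2 | R < ‖x‖}, ((1 + ‖x‖ ^ 2) : ℝ) ^ (-δ : ℝ) * ‖fderiv ℝ u x‖ ^ 2
    with hB
  have hA0 : 0 ≤ A := by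
    apply setIntegral_nonneg (by
      apply measurableSet_lt measurable_const
      exact continuous_norm.measurable)
    intro x _
    have : (0:ℝ) < (1 + ‖x‖^2 : ℝ) ^ (-δ - 1 : ℝ) := Real.rpow_pos_of_pos (by positivity) _
    positivity
  have hB0 : 0 ≤ B := by
    apply setIntegral_nonneg (by
      apply measurableSet_lt measurable_const
      exact continuous_norm.measurable)
    intro x _
    have : (0:ℝ) < (1 + ‖x‖^2 : ℝ) ^ (-δ : ℝ) := Real.rpow_pos_of_pos (by positivity) _
    positivity
  -- continuity of weights on E2
  have hwcont : ∀ c : ℝ, Continuous (fun x : E2 => ((1 + ‖x‖ ^ 2) : ℝ) ^ (c : ℝ)) := by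
    intro c
    apply Continuous.rpow_const (by continuity)
    intro x; left; positivity
  -- Step 1: polar coordinates for A
  set FA : E2 → ℝ := fun x => ((1 + ‖x‖ ^ 2) : ℝ) ^ (-δ - 1 : ℝ) * u x ^ 2 with hFA
  have hFAcont : Continuous FA := (hwcont _).mul (hu.continuous.pow 2)
  have hFAvan : ∀ x : E2, M < ‖x‖ → FA x = 0 := fun x hx => by simp [hFA, hM x hx]
  obtain ⟨hintA, hpolarA⟩ := polar_eq hR FA hFAcont hFAvan
  -- Step 2: polar coordinates for the mixed term
  set FM : E2 → ℝ := fun x =>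
    ((1 + ‖x‖ ^ 2) : ℝ) ^ (-δ - 1/2 : ℝ) * (|u x| * ‖fderiv ℝ u x‖) with hFM
  have hFMcont : Continuous FM := (hwcont _).mul ((hu.continuous.abs).mul hDu.norm)
  have hFMvan : ∀ x : E2, M < ‖x‖ → FM x = 0 := fun x hx => by simp [hFM, hM x hx]
  obtain ⟨hintM, hpolarM⟩ := polar_eq hR FM hFMcont hFMvan
  -- Step 3: the main estimate via the per-ray inequality
  have hmain : |δ| * A ≤ K * ∫ x in {x : E2 | R < ‖x‖}, FM x := by
    rw [hA, hpolarA, hpolarM, prod_to_iterated hintA, prod_to_iterated hintM,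
      ← integral_const_mul, ← integral_const_mul]
    apply integral_mono (Integrable.const_mul (marginal_integrable hintA) _)
      (Integrable.const_mul (marginal_integrable hintM) _)
    intro θ
    simp only
    have h2 := key2 hR hδ hu hb hM hM0 (cvec θ) (norm_cvec θ)
    calc |δ| * ∫ r in Ioi R, r * FA (r • cvec θ)
        = |δ| * ∫ r in Ioi R, r * (1 + r^2) ^ (-δ - 1 : ℝ) * u (r • cvec θ) ^ 2 := by
          congr 1
          apply setIntegral_congr_fun measurableSet_Ioi
          intro r hr
          simp only [hFA, norm_polarmap, sq_abs]
          ring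
      _ ≤ K * ∫ r in Ioi R, r * (1 + r^2) ^ (-δ - 1/2 : ℝ)
            * (|u (r • cvec θ)| * ‖fderiv ℝ u (r • cvec θ)‖) := h2
      _ = K * ∫ r in Ioi R, r * FM (r • cvec θ) := by
          congr 1
          apply setIntegral_congr_fun measurableSet_Ioi
          intro r hr
          simp only [hFM, norm_polarmap, sq_abs]
          ring
  -- Step 4: Cauchy–Schwarz
  have hCS : ∫ x in {x : E2 | R < ‖x‖}, FM x ≤ Real.sqrt A * Real.sqrt B := by
    set F1 : E2 → ℝ := fun x => ((1 + ‖x‖ ^ 2) : ℝ) ^ ((-δ - 1)/2 : ℝ) * |u x| with hF1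
    set F2 : E2 → ℝ := fun x => ((1 + ‖x‖ ^ 2) : ℝ) ^ (-δ/2 : ℝ) * ‖fderiv ℝ u x‖ with hF2
    have hF1cont : Continuous F1 := (hwcont _).mul hu.continuous.abs
    have hF2cont : Continuous F2 := (hwcont _).mul hDu.norm
    have hF1supp : HasCompactSupport F1 := by
      apply HasCompactSupport.intro (K := Metric.closedBall (0:E2) M) (isCompact_closedBall _ _)
      intro x hx
      rw [Metric.mem_closedBall, dist_zero_right, not_le] at hx
      simp [hF1, hM x hx]
    have hF2supp : HasCompactSupport F2 := by
      apply HasCompactSupport.intro (K := Metric.closedBall (0:E2) M) (isCompact_closedBall _ _)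
      intro x hx
      rw [Metric.mem_closedBall, dist_zero_right, not_le] at hx
      have : u x = 0 := hM x hx
      have hfd : fderiv ℝ u x = 0 := by
        have : ∀ᶠ y in 𝓝 x, u y = 0 := by
          have hopen : IsOpen {y : E2 | M < ‖y‖} := isOpen_lt continuous_const continuous_norm
          filter_upwards [hopen.mem_nhds hx] with y hy using hM y hy
        have := Filter.EventuallyEq.fderiv_eq (𝕜 := ℝ) this
        simp [this]
      simp [hF2, hfd]
    have hmemp : (2:ℝ).HolderConjugate 2 := by
      constructor <;> norm_num
    have hF1mem : MemLp F1 (ENNReal.ofReal 2) (volume.restrict {x : E2 | R < ‖x‖}) :=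
      (hF1cont.memLp_of_hasCompactSupport (p := ENNReal.ofReal 2) hF1supp).restrict _
    have hF2mem : MemLp F2 (ENNReal.ofReal 2) (volume.restrict {x : E2 | R < ‖x‖}) :=
      (hF2cont.memLp_of_hasCompactSupport (p := ENNReal.ofReal 2) hF2supp).restrict _
    have hH := integral_mul_le_Lp_mul_Lq_of_nonneg hmemp
      (Filter.Eventually.of_forall fun x => by
        have : (0:ℝ) < (1 + ‖x‖^2 : ℝ) ^ ((-δ - 1)/2 : ℝ) := Real.rpow_pos_of_pos (by positivity) _
        positivity)
      (Filter.Eventually.of_forall fun x => by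
        have : (0:ℝ) < (1 + ‖x‖^2 : ℝ) ^ (-δ/2 : ℝ) := Real.rpow_pos_of_pos (by positivity) _
        positivity)
      hF1mem hF2mem
    have heq1 : ∫ x in {x : E2 | R < ‖x‖}, F1 x * F2 x = ∫ x in {x : E2 | R < ‖x‖}, FM x := by
      apply setIntegral_congr_fun (by
        apply measurableSet_lt measurable_const
        exact continuous_norm.measurable)
      intro x _
      simp only [hF1, hF2, hFM]
      rw [show ((1 + ‖x‖ ^ 2 :ℝ)) ^ ((-δ - 1)/2 : ℝ) * |u x| * (((1 + ‖x‖ ^ 2):ℝ) ^ (-δ/2 : ℝ) * ‖fderiv ℝ u x‖)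
          = (((1 + ‖x‖ ^ 2):ℝ) ^ ((-δ - 1)/2 : ℝ) * ((1 + ‖x‖ ^ 2):ℝ) ^ (-δ/2 : ℝ)) * (|u x| * ‖fderiv ℝ u x‖) by ring]
      rw [← Real.rpow_add (by positivity),
        show ((-δ - 1)/2 + -δ/2 : ℝ) = -δ - 1/2 by ring]
    have heq2 : ∫ x in {x : E2 | R < ‖x‖}, F1 x ^ (2:ℝ) = A := by
      rw [hA]
      apply setIntegral_congr_fun (by
        apply measurableSet_lt measurable_const
        exact continuous_norm.measurable)
      intro x _
      have hw0 : (0:ℝ) ≤ 1 + ‖x‖^2 := by positivity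
      simp only [hF1]
      calc (((1 + ‖x‖ ^ 2):ℝ) ^ ((-δ - 1)/2 : ℝ) * |u x|) ^ (2:ℝ)
          = (((1 + ‖x‖ ^ 2):ℝ) ^ ((-δ - 1)/2 : ℝ) * |u x|) ^ (2:ℕ) := by
            rw [← Real.rpow_natCast (((1 + ‖x‖ ^ 2):ℝ) ^ ((-δ - 1)/2 : ℝ) * |u x|) 2]
            norm_num
        _ = (((1 + ‖x‖ ^ 2):ℝ) ^ ((-δ - 1)/2 : ℝ)) ^ (2:ℕ) * |u x| ^ (2:ℕ) := mul_pow _ _ _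
        _ = ((1 + ‖x‖ ^ 2):ℝ) ^ (-δ - 1 : ℝ) * u x ^ 2 := by
            rw [← Real.rpow_natCast (((1 + ‖x‖ ^ 2):ℝ) ^ ((-δ - 1)/2 : ℝ)) 2,
              ← Real.rpow_mul hw0, sq_abs,
              show ((-δ - 1)/2 : ℝ) * ((2:ℕ):ℝ) = -δ - 1 by push_cast; ring]
    have heq3 : ∫ x in {x : E2 | R < ‖x‖}, F2 x ^ (2:ℝ) = B := by
      rw [hB]
      apply setIntegral_congr_fun (by
        apply measurableSet_lt measurable_const
        exact continuous_norm.measurable)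
      intro x _
      have hw0 : (0:ℝ) ≤ 1 + ‖x‖^2 := by positivity
      simp only [hF2]
      calc (((1 + ‖x‖ ^ 2):ℝ) ^ (-δ/2 : ℝ) * ‖fderiv ℝ u x‖) ^ (2:ℝ)
          = (((1 + ‖x‖ ^ 2):ℝ) ^ (-δ/2 : ℝ) * ‖fderiv ℝ u x‖) ^ (2:ℕ) := by
            rw [← Real.rpow_natCast (((1 + ‖x‖ ^ 2):ℝ) ^ (-δ/2 : ℝ) * ‖fderiv ℝ u x‖) 2]
            norm_num
        _ = (((1 + ‖x‖ ^ 2):ℝ) ^ (-δ/2 : ℝ)) ^ (2:ℕ) * ‖fderiv ℝ u x‖ ^ (2:ℕ) := mul_pow _ _ _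
        _ = ((1 + ‖x‖ ^ 2):ℝ) ^ (-δ : ℝ) * ‖fderiv ℝ u x‖ ^ 2 := by
            rw [← Real.rpow_natCast (((1 + ‖x‖ ^ 2):ℝ) ^ (-δ/2 : ℝ)) 2,
              ← Real.rpow_mul hw0,
              show (-δ/2 : ℝ) * ((2:ℕ):ℝ) = -δ by push_cast; ring]
    rw [heq1, heq2, heq3] at hH
    rw [← Real.sqrt_eq_rpow, ← Real.sqrt_eq_rpow] at hH
    exact hH
  -- final algebra
  have hfinal : |δ| * A ≤ K * (Real.sqrt A * Real.sqrt B) :=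
    hmain.trans (mul_le_mul_of_nonneg_left hCS hKpos.le)
  by_cases hAz : Real.sqrt A = 0
  · rw [hAz]
    exact mul_nonneg (div_nonneg hKpos.le hδa.le) (Real.sqrt_nonneg B)
  · have hApos : 0 < Real.sqrt A := lt_of_le_of_ne (Real.sqrt_nonneg A) (Ne.symm hAz)
    have h6 : (|δ| * Real.sqrt A) * Real.sqrt A ≤ (K * Real.sqrt B) * Real.sqrt A := by
      have : |δ| * (Real.sqrt A * Real.sqrt A) ≤ K * (Real.sqrt A * Real.sqrt B) := by
        rw [Real.mul_self_sqrt hA0]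
        exact hfinal
      nlinarith [Real.sqrt_nonneg B]
    have h7 : |δ| * Real.sqrt A ≤ K * Real.sqrt B := le_of_mul_le_mul_right h6 hApos
    rw [div_mul_eq_mul_div, le_div_iff₀ hδa]
    linarith [h7]

end
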